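/- Assume the N-player Riccati system has a solution (P_1, …, P_N) on [0, T], and let (S_1, …, S_N) and (r_1, …, r_N) be the solutions of the associated linear terminal value problems. Then: (i) there exist functions θ_1, θ_2 : [0,T] → ℝ^n such that for every i and t, the vector S_i(t) ∈ ℝ^{Nn}, partitioned into N blocks of size n, has i-th block θ_1(t) and all other blocks equal to θ_2(t); (ii) r_1(t) = r_2(t) = ⋯ = r_N(t) for all t ∈ [0, T]. -/

import Mathlib

open Matrix

/-- `Â = I_N ⊗ A + (1/N)(𝟙_{N×N} ⊗ G)`, written entrywise. -/
noncomputable def hatA (n N : ℕ) (A G : Matrix (Fin n) (Fin n) ℝ) :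
    Matrix (Fin N × Fin n) (Fin N × Fin n) ℝ :=
  Matrix.of fun p q => (if p.1 = q.1 then A p.2 q.2 else 0) + (1 / (N : ℝ)) * G p.2 q.2

/-- `B_k = e_k ⊗ B`. -/
noncomputable def Bblk (n n1 N : ℕ) (B : Matrix (Fin n) (Fin n1) ℝ) (k : Fin N) :
    Matrix (Fin N × Fin n) (Fin n1) ℝ :=
  Matrix.of fun p c => if p.1 = k then B p.2 c else 0

/-- `K_i = [0,…,0, I_n, 0,…,0] − (1/N)[Γ, …, Γ]` with `I_n` in the `i`-th block. -/
noncomputable def Kblk (n N : ℕ) (Γ : Matrix (Fin n) (Fin n) ℝ) (i : Fin N) :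
    Matrix (Fin n) (Fin N × Fin n) ℝ :=
  Matrix.of fun r q => (if q.1 = i ∧ r = q.2 then (1 : ℝ) else 0) - (1 / (N : ℝ)) * Γ r q.2

/-- `Q_i = K_iᵀ Q K_i` (and `Q_{if} = K_{if}ᵀ Q_f K_{if}` with `Γ_f, Q_f`). -/
noncomputable def Qblk (n N : ℕ) (Q Γ : Matrix (Fin n) (Fin n) ℝ) (i : Fin N) :
    Matrix (Fin N × Fin n) (Fin N × Fin n) ℝ :=
  (Kblk n N Γ i)ᵀ * Q * Kblk n N Γ i

/-- Right-hand side of the `N`-player Riccati system: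
`−(P_i Â + Âᵀ P_i) + P_i Σ_k B_k R⁻¹ B_kᵀ P_k + Σ_k P_k B_k R⁻¹ B_kᵀ P_i
  − P_i B_i R⁻¹ B_iᵀ P_i − Q_i`. -/
noncomputable def riccatiRHS (n n1 N : ℕ) (A G Q Γ : Matrix (Fin n) (Fin n) ℝ)
    (B : Matrix (Fin n) (Fin n1) ℝ) (R : Matrix (Fin n1) (Fin n1) ℝ)
    (P : Fin N → Matrix (Fin N × Fin n) (Fin N × Fin n) ℝ) (i : Fin N) :
    Matrix (Fin N × Fin n) (Fin N × Fin n) ℝ :=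
  -(P i * hatA n N A G + (hatA n N A G)ᵀ * P i)
    + P i * (∑ k, Bblk n n1 N B k * R⁻¹ * (Bblk n n1 N B k)ᵀ * P k)
    + (∑ k, P k * Bblk n n1 N B k * R⁻¹ * (Bblk n n1 N B k)ᵀ) * P i
    - P i * Bblk n n1 N B i * R⁻¹ * (Bblk n n1 N B i)ᵀ * P i
    - Qblk n N Q Γ i

/-- `(P_1, …, P_N)` solves the `N`-player Riccati terminal value problem on `[τ, T]`:
each `P_i` is differentiable on `[τ,T]` with derivative given by the Riccati right-hand
side (entrywise), and `P_i(T) = Q_{if}`. -/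
def IsRiccatiSol (n n1 N : ℕ) (A G Q Qf Γ Γf : Matrix (Fin n) (Fin n) ℝ)
    (B : Matrix (Fin n) (Fin n1) ℝ) (R : Matrix (Fin n1) (Fin n1) ℝ) (τ T : ℝ)
    (P : Fin N → ℝ → Matrix (Fin N × Fin n) (Fin N × Fin n) ℝ) : Prop :=
  (∀ i, ∀ t ∈ Set.Icc τ T, ∀ p q,
      HasDerivWithinAt (fun s => P i s p q)
        (riccatiRHS n n1 N A G Q Γ B R (fun k => P k t) i p q) (Set.Icc τ T) t)
  ∧ ∀ i, P i T = Qblk n N Qf Γf i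

/-- `D̂ = I_N ⊗ D`, written entrywise. -/
noncomputable def hatD (n n2 N : ℕ) (D : Matrix (Fin n) (Fin n2) ℝ) :
    Matrix (Fin N × Fin n) (Fin N × Fin n2) ℝ :=
  Matrix.of fun p q => if p.1 = q.1 then D p.2 q.2 else 0

/-- Right-hand side of the linear ODE for `S_i`:
`−Âᵀ S_i − P_i B_i R⁻¹ B_iᵀ S_i + P_i Σ_k B_k R⁻¹ B_kᵀ S_k
 + Σ_k P_k B_k R⁻¹ B_kᵀ S_i + K_iᵀ Q η`. -/
noncomputable def sRHS (n n1 N : ℕ) (A G Q Γ : Matrix (Fin n) (Fin n) ℝ)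
    (B : Matrix (Fin n) (Fin n1) ℝ) (R : Matrix (Fin n1) (Fin n1) ℝ)
    (η : Fin n → ℝ)
    (P : Fin N → Matrix (Fin N × Fin n) (Fin N × Fin n) ℝ)
    (S : Fin N → (Fin N × Fin n → ℝ)) (i : Fin N) : Fin N × Fin n → ℝ :=
  -((hatA n N A G)ᵀ *ᵥ S i)
    - (P i * Bblk n n1 N B i * R⁻¹ * (Bblk n n1 N B i)ᵀ) *ᵥ S i
    + P i *ᵥ (∑ k, (Bblk n n1 N B k * R⁻¹ * (Bblk n n1 N B k)ᵀ) *ᵥ S k)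
    + (∑ k, P k * Bblk n n1 N B k * R⁻¹ * (Bblk n n1 N B k)ᵀ) *ᵥ S i
    + (Kblk n N Γ i)ᵀ *ᵥ (Q *ᵥ η)

/-- Right-hand side of the ODE for `r_i`:
`2 S_iᵀ Σ_k B_k R⁻¹ B_kᵀ S_k − S_iᵀ B_i R⁻¹ B_iᵀ S_i − ηᵀ Q η − Tr(D̂ᵀ P_i D̂)`. -/
noncomputable def rRHS (n n1 n2 N : ℕ) (Q : Matrix (Fin n) (Fin n) ℝ)
    (B : Matrix (Fin n) (Fin n1) ℝ) (R : Matrix (Fin n1) (Fin n1) ℝ)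
    (D : Matrix (Fin n) (Fin n2) ℝ) (η : Fin n → ℝ)
    (P : Fin N → Matrix (Fin N × Fin n) (Fin N × Fin n) ℝ)
    (S : Fin N → (Fin N × Fin n → ℝ)) (i : Fin N) : ℝ :=
  2 * (S i ⬝ᵥ (∑ k, (Bblk n n1 N B k * R⁻¹ * (Bblk n n1 N B k)ᵀ) *ᵥ S k))
    - S i ⬝ᵥ ((Bblk n n1 N B i * R⁻¹ * (Bblk n n1 N B i)ᵀ) *ᵥ S i)
    - η ⬝ᵥ (Q *ᵥ η)
    - ((hatD n n2 N D)ᵀ * P i * hatD n n2 N D).trace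

section PermLemmas
variable {n n1 n2 N : ℕ}

/-- block permutation on `Fin N × Fin m` -/
def pez (σ : Equiv.Perm (Fin N)) (m : ℕ) : (Fin N × Fin m) ≃ (Fin N × Fin m) :=
  σ.prodCongr (Equiv.refl _)

@[simp] lemma pez_apply (σ : Equiv.Perm (Fin N)) (m : ℕ) (p : Fin N × Fin m) :
    pez σ m p = (σ p.1, p.2) := rfl

variable (σ : Equiv.Perm (Fin N))

lemma hatA_pe (A G : Matrix (Fin n) (Fin n) ℝ) :
    (hatA n N A G).submatrix (pez σ n) (pez σ n) = hatA n N A G := by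
  ext p q
  simp [hatA, Matrix.submatrix_apply]

lemma hatAT_pe (A G : Matrix (Fin n) (Fin n) ℝ) :
    (hatA n N A G)ᵀ.submatrix (pez σ n) (pez σ n) = (hatA n N A G)ᵀ := by
  rw [← transpose_submatrix, hatA_pe]

lemma Bblk_pe (B : Matrix (Fin n) (Fin n1) ℝ) (k : Fin N) :
    (Bblk n n1 N B (σ k)).submatrix (pez σ n) (id : Fin n1 → Fin n1) = Bblk n n1 N B k := by
  ext p c
  simp [Bblk, Matrix.submatrix_apply]

lemma Kblk_pe (Γ : Matrix (Fin n) (Fin n) ℝ) (i : Fin N) :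
    (Kblk n N Γ (σ i)).submatrix (id : Fin n → Fin n) (pez σ n) = Kblk n N Γ i := by
  ext r q
  simp [Kblk, Matrix.submatrix_apply]

lemma hatD_pe (D : Matrix (Fin n) (Fin n2) ℝ) :
    (hatD n n2 N D).submatrix (pez σ n) (pez σ n2) = hatD n n2 N D := by
  ext p q
  simp [hatD, Matrix.submatrix_apply]

lemma submatrix_sum {ι l o m' n' : Type*} [Fintype ι] (F : ι → Matrix m' n' ℝ)
    (a : l → m') (b : o → n') :
    (∑ k, F k).submatrix a b = ∑ k, (F k).submatrix a b := by
  ext p q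
  simp [Matrix.submatrix_apply, Matrix.sum_apply]

-- product-splitting lemmas
lemma smul_bb (M M' : Matrix (Fin N × Fin n) (Fin N × Fin n) ℝ) :
    (M * M').submatrix (pez σ n) (pez σ n)
      = M.submatrix (pez σ n) (pez σ n) * M'.submatrix (pez σ n) (pez σ n) :=
  (Matrix.submatrix_mul_equiv M M' _ (pez σ n) _).symm

lemma smul_b1 (M : Matrix (Fin N × Fin n) (Fin N × Fin n) ℝ)
    (Y : Matrix (Fin N × Fin n) (Fin n1) ℝ) :
    (M * Y).submatrix (pez σ n) (id : Fin n1 → Fin n1)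
      = M.submatrix (pez σ n) (pez σ n) * Y.submatrix (pez σ n) (id : Fin n1 → Fin n1) :=
  (Matrix.submatrix_mul_equiv M Y _ (pez σ n) _).symm

lemma smul_mid1 (X : Matrix (Fin N × Fin n) (Fin n1) ℝ)
    (Y : Matrix (Fin n1) (Fin N × Fin n) ℝ) :
    (X * Y).submatrix (pez σ n) (pez σ n)
      = X.submatrix (pez σ n) (id : Fin n1 → Fin n1)
        * Y.submatrix (id : Fin n1 → Fin n1) (pez σ n) := by
  have h := (Matrix.submatrix_mul_equiv X Y (⇑(pez σ n)) (Equiv.refl (Fin n1)) (⇑(pez σ n))).symm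
  simpa using h

lemma smul_11 (X : Matrix (Fin N × Fin n) (Fin n1) ℝ) (W : Matrix (Fin n1) (Fin n1) ℝ) :
    (X * W).submatrix (pez σ n) (id : Fin n1 → Fin n1)
      = X.submatrix (pez σ n) (id : Fin n1 → Fin n1) * W := by
  have h := (Matrix.submatrix_mul_equiv X W (⇑(pez σ n)) (Equiv.refl (Fin n1)) (id : Fin n1 → Fin n1)).symm
  simpa using h

lemma Mblk_pe (B : Matrix (Fin n) (Fin n1) ℝ) (R : Matrix (Fin n1) (Fin n1) ℝ) (k : Fin N) :
    (Bblk n n1 N B (σ k) * R⁻¹ * (Bblk n n1 N B (σ k))ᵀ).submatrix (pez σ n) (pez σ n)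
      = Bblk n n1 N B k * R⁻¹ * (Bblk n n1 N B k)ᵀ := by
  rw [smul_mid1, smul_11, ← transpose_submatrix, Bblk_pe]

lemma PBRBT_pe (Pm : Matrix (Fin N × Fin n) (Fin N × Fin n) ℝ)
    (B : Matrix (Fin n) (Fin n1) ℝ) (R : Matrix (Fin n1) (Fin n1) ℝ) (k : Fin N) :
    (Pm * Bblk n n1 N B (σ k) * R⁻¹ * (Bblk n n1 N B (σ k))ᵀ).submatrix (pez σ n) (pez σ n)
      = Pm.submatrix (pez σ n) (pez σ n) * Bblk n n1 N B k * R⁻¹ * (Bblk n n1 N B k)ᵀ := by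
  rw [smul_mid1, smul_11, smul_b1, ← transpose_submatrix, Bblk_pe]

lemma Qblk_pe (Q Γ : Matrix (Fin n) (Fin n) ℝ) (i : Fin N) :
    (Qblk n N Q Γ (σ i)).submatrix (pez σ n) (pez σ n) = Qblk n N Q Γ i := by
  ext p q
  simp [Qblk, Matrix.mul_apply, Kblk, Matrix.submatrix_apply]

end PermLemmas

section Equivariance
variable {n n1 n2 N : ℕ} (σ : Equiv.Perm (Fin N))

lemma V1 (M : Matrix (Fin N × Fin n) (Fin N × Fin n) ℝ) (v : Fin N × Fin n → ℝ) :
    M.submatrix (pez σ n) (pez σ n) *ᵥ (v ∘ (pez σ n)) = (M *ᵥ v) ∘ (pez σ n) := by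
  have hv : (v ∘ ⇑(pez σ n)) ∘ ⇑(pez σ n).symm = v := by funext q; simp
  rw [Matrix.submatrix_mulVec_equiv, hv]

lemma sum_comp_perm (g : Fin N → (Fin N × Fin n) → ℝ) :
    (∑ k, (g (σ k)) ∘ ⇑(pez σ n)) = (∑ k, g k) ∘ ⇑(pez σ n) := by
  funext p
  simp only [Finset.sum_apply, Function.comp_apply]
  exact Equiv.sum_comp σ (fun k => g k (pez σ n p))

variable (A G Q Γ : Matrix (Fin n) (Fin n) ℝ) (B : Matrix (Fin n) (Fin n1) ℝ)
  (R : Matrix (Fin n1) (Fin n1) ℝ) (D : Matrix (Fin n) (Fin n2) ℝ) (η : Fin n → ℝ)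
  (P : Fin N → Matrix (Fin N × Fin n) (Fin N × Fin n) ℝ)
  (S : Fin N → (Fin N × Fin n → ℝ))

lemma sumMP_pe :
    (∑ k, Bblk n n1 N B k * R⁻¹ * (Bblk n n1 N B k)ᵀ * P k).submatrix (pez σ n) (pez σ n)
      = ∑ k, Bblk n n1 N B k * R⁻¹ * (Bblk n n1 N B k)ᵀ
          * ((P (σ k)).submatrix (pez σ n) (pez σ n)) := by
  rw [submatrix_sum,
    ← Equiv.sum_comp σ
      (fun k => (Bblk n n1 N B k * R⁻¹ * (Bblk n n1 N B k)ᵀ * P k).submatrix (pez σ n) (pez σ n))]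
  refine Finset.sum_congr rfl fun k _ => ?_
  rw [smul_bb, Mblk_pe]

lemma sumPM_pe :
    (∑ k, P k * Bblk n n1 N B k * R⁻¹ * (Bblk n n1 N B k)ᵀ).submatrix (pez σ n) (pez σ n)
      = ∑ k, ((P (σ k)).submatrix (pez σ n) (pez σ n))
          * Bblk n n1 N B k * R⁻¹ * (Bblk n n1 N B k)ᵀ := by
  rw [submatrix_sum,
    ← Equiv.sum_comp σ
      (fun k => (P k * Bblk n n1 N B k * R⁻¹ * (Bblk n n1 N B k)ᵀ).submatrix (pez σ n) (pez σ n))]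
  exact Finset.sum_congr rfl fun k _ => PBRBT_pe σ _ _ _ _

lemma riccati_equiv (i : Fin N) :
    riccatiRHS n n1 N A G Q Γ B R (fun k => (P (σ k)).submatrix (pez σ n) (pez σ n)) i
      = (riccatiRHS n n1 N A G Q Γ B R P (σ i)).submatrix (pez σ n) (pez σ n) := by
  simp only [riccatiRHS]
  simp only [Matrix.submatrix_add, Matrix.submatrix_sub, Matrix.submatrix_neg,
    Pi.add_apply, Pi.sub_apply, Pi.neg_apply]
  rw [smul_bb σ (P (σ i)) (hatA n N A G), hatA_pe,
    smul_bb σ ((hatA n N A G)ᵀ) (P (σ i)), hatAT_pe,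
    smul_bb σ (P (σ i)), sumMP_pe,
    smul_bb σ _ (P (σ i)), sumPM_pe,
    smul_bb σ _ (P (σ i)), PBRBT_pe, Qblk_pe]

lemma sumMS_pe :
    (∑ k, (Bblk n n1 N B k * R⁻¹ * (Bblk n n1 N B k)ᵀ) *ᵥ ((S (σ k)) ∘ ⇑(pez σ n)))
      = (∑ k, (Bblk n n1 N B k * R⁻¹ * (Bblk n n1 N B k)ᵀ) *ᵥ S k) ∘ ⇑(pez σ n) := by
  rw [← sum_comp_perm σ (fun k => (Bblk n n1 N B k * R⁻¹ * (Bblk n n1 N B k)ᵀ) *ᵥ S k)]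
  refine Finset.sum_congr rfl fun k _ => ?_
  rw [← Mblk_pe σ B R k, V1]

lemma KT_vec (i : Fin N) (w : Fin n → ℝ) :
    (Kblk n N Γ i)ᵀ *ᵥ w = ((Kblk n N Γ (σ i))ᵀ *ᵥ w) ∘ ⇑(pez σ n) := by
  funext p
  simp [Matrix.mulVec, dotProduct, Kblk]

lemma sRHS_equiv (i : Fin N) :
    sRHS n n1 N A G Q Γ B R η (fun k => (P (σ k)).submatrix (pez σ n) (pez σ n))
        (fun k => (S (σ k)) ∘ ⇑(pez σ n)) i
      = (sRHS n n1 N A G Q Γ B R η P S (σ i)) ∘ ⇑(pez σ n) := by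
  simp only [sRHS]
  have t1 : (hatA n N A G)ᵀ *ᵥ ((S (σ i)) ∘ ⇑(pez σ n))
      = ((hatA n N A G)ᵀ *ᵥ S (σ i)) ∘ ⇑(pez σ n) := by
    conv_lhs => rw [← hatAT_pe σ A G]
    rw [V1]
  have t2 : ((P (σ i)).submatrix (pez σ n) (pez σ n) * Bblk n n1 N B i * R⁻¹
        * (Bblk n n1 N B i)ᵀ) *ᵥ ((S (σ i)) ∘ ⇑(pez σ n))
      = ((P (σ i) * Bblk n n1 N B (σ i) * R⁻¹ * (Bblk n n1 N B (σ i))ᵀ) *ᵥ S (σ i))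
          ∘ ⇑(pez σ n) := by
    rw [← PBRBT_pe σ (P (σ i)) B R i, V1]
  have t3 : (P (σ i)).submatrix (pez σ n) (pez σ n)
        *ᵥ (∑ k, (Bblk n n1 N B k * R⁻¹ * (Bblk n n1 N B k)ᵀ) *ᵥ ((S (σ k)) ∘ ⇑(pez σ n)))
      = (P (σ i) *ᵥ (∑ k, (Bblk n n1 N B k * R⁻¹ * (Bblk n n1 N B k)ᵀ) *ᵥ S k))
          ∘ ⇑(pez σ n) := by
    rw [sumMS_pe, V1]
  have t4 : (∑ k, ((P (σ k)).submatrix (pez σ n) (pez σ n)) * Bblk n n1 N B k * R⁻¹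
        * (Bblk n n1 N B k)ᵀ) *ᵥ ((S (σ i)) ∘ ⇑(pez σ n))
      = ((∑ k, P k * Bblk n n1 N B k * R⁻¹ * (Bblk n n1 N B k)ᵀ) *ᵥ S (σ i))
          ∘ ⇑(pez σ n) := by
    rw [← sumPM_pe, V1]
  rw [t1, t2, t3, t4, KT_vec σ Γ i (Q *ᵥ η)]
  funext p
  simp only [Function.comp_apply, Pi.add_apply, Pi.sub_apply, Pi.neg_apply]

lemma trace_submatrix_pe {m' : Type*} [Fintype m'] (e : m' ≃ m') (M : Matrix m' m' ℝ) :
    (M.submatrix ⇑e ⇑e).trace = M.trace := by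
  simp only [Matrix.trace, Matrix.diag, Matrix.submatrix_apply]
  exact Equiv.sum_comp e fun x => M x x

lemma trace_pe (Pm : Matrix (Fin N × Fin n) (Fin N × Fin n) ℝ) :
    ((hatD n n2 N D)ᵀ * (Pm.submatrix (pez σ n) (pez σ n)) * hatD n n2 N D).trace
      = ((hatD n n2 N D)ᵀ * Pm * hatD n n2 N D).trace := by
  conv_lhs => rw [← hatD_pe σ D]
  rw [transpose_submatrix, Matrix.submatrix_mul_equiv, Matrix.submatrix_mul_equiv,
    trace_submatrix_pe]

lemma rRHS_equiv (i : Fin N) :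
    rRHS n n1 n2 N Q B R D η (fun k => (P (σ k)).submatrix (pez σ n) (pez σ n))
        (fun k => (S (σ k)) ∘ ⇑(pez σ n)) i
      = rRHS n n1 n2 N Q B R D η P S (σ i) := by
  simp only [rRHS]
  rw [sumMS_pe, ← Mblk_pe σ B R i, V1, trace_pe,
    comp_equiv_dotProduct_comp_equiv, comp_equiv_dotProduct_comp_equiv]

end Equivariance

section ODEField
open Set

abbrev EEsp (n N : ℕ) :=
  (Fin N → (Fin N × Fin n) → (Fin N × Fin n) → ℝ) × (Fin N → (Fin N × Fin n) → ℝ) × (Fin N → ℝ)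

noncomputable def FF (n n1 n2 N : ℕ) (A G Q Γ : Matrix (Fin n) (Fin n) ℝ)
    (B : Matrix (Fin n) (Fin n1) ℝ) (R : Matrix (Fin n1) (Fin n1) ℝ)
    (D : Matrix (Fin n) (Fin n2) ℝ) (η : Fin n → ℝ) : EEsp n N → EEsp n N :=
  fun X =>
    (fun i p q => riccatiRHS n n1 N A G Q Γ B R (fun k => Matrix.of (X.1 k)) i p q,
     fun i p => sRHS n n1 N A G Q Γ B R η (fun k => Matrix.of (X.1 k)) X.2.1 i p,
     fun i => rRHS n n1 n2 N Q B R D η (fun k => Matrix.of (X.1 k)) X.2.1 i)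

attribute [local fun_prop] ContDiff.sum

lemma FF_contDiff (n n1 n2 N : ℕ) (A G Q Γ : Matrix (Fin n) (Fin n) ℝ)
    (B : Matrix (Fin n) (Fin n1) ℝ) (R : Matrix (Fin n1) (Fin n1) ℝ)
    (D : Matrix (Fin n) (Fin n2) ℝ) (η : Fin n → ℝ) :
    ContDiff ℝ 1 (FF n n1 n2 N A G Q Γ B R D η) := by
  apply ContDiff.prodMk
  · rw [contDiff_pi]; intro i; rw [contDiff_pi]; intro p; rw [contDiff_pi]; intro q
    simp only [FF, riccatiRHS, Matrix.mul_apply, Matrix.sum_apply, Matrix.add_apply,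
      Matrix.sub_apply, Matrix.neg_apply, Matrix.of_apply, Matrix.transpose_apply]
    fun_prop
  apply ContDiff.prodMk
  · rw [contDiff_pi]; intro i; rw [contDiff_pi]; intro p
    simp only [FF, sRHS, Matrix.mulVec, dotProduct, Matrix.mul_apply, Matrix.sum_apply,
      Matrix.add_apply, Matrix.sub_apply, Matrix.neg_apply, Matrix.of_apply,
      Matrix.transpose_apply, Pi.add_apply, Pi.sub_apply, Pi.neg_apply, Finset.sum_apply]
    fun_prop
  · rw [contDiff_pi]; intro i
    simp only [FF, rRHS, Matrix.mulVec, dotProduct, Matrix.trace, Matrix.diag,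
      Matrix.mul_apply, Matrix.sum_apply, Matrix.add_apply, Matrix.sub_apply, Matrix.neg_apply,
      Matrix.of_apply, Matrix.transpose_apply, Pi.add_apply, Pi.sub_apply, Pi.neg_apply,
      Finset.sum_apply]
    fun_prop

end ODEField

section Uniqueness
open Set

lemma terminal_unique {E : Type*} [NormedAddCommGroup E] [NormedSpace ℝ E]
    {F : E → E} {K : NNReal} {s : Set E} (hF : LipschitzOnWith K F s)
    {x y : ℝ → E} {T : ℝ}
    (hx : ∀ t ∈ Icc (0:ℝ) T, HasDerivWithinAt x (F (x t)) (Icc (0:ℝ) T) t)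
    (hy : ∀ t ∈ Icc (0:ℝ) T, HasDerivWithinAt y (F (y t)) (Icc (0:ℝ) T) t)
    (hxs : ∀ t ∈ Icc (0:ℝ) T, x t ∈ s) (hys : ∀ t ∈ Icc (0:ℝ) T, y t ∈ s)
    (hend : x T = y T) : Set.EqOn x y (Icc (0:ℝ) T) := by
  refine ODE_solution_unique_of_mem_Icc_left (v := fun _ => F) (s := fun _ => s) (K := K)
    (fun _ _ => hF) (fun t ht => (hx t ht).continuousWithinAt) ?_
    (fun t ht => hxs t (Ioc_subset_Icc_self ht))
    (fun t ht => (hy t ht).continuousWithinAt) ?_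
    (fun t ht => hys t (Ioc_subset_Icc_self ht)) hend
  · intro t ht
    exact (hx t (Ioc_subset_Icc_self ht)).mono_of_mem_nhdsWithin (Icc_mem_nhdsLE_of_mem ht)
  · intro t ht
    exact (hy t (Ioc_subset_Icc_self ht)).mono_of_mem_nhdsWithin (Icc_mem_nhdsLE_of_mem ht)

lemma lips_on_ball {E : Type*} [NormedAddCommGroup E] [NormedSpace ℝ E]
    [FiniteDimensional ℝ E] {F : E → E} (hF : ContDiff ℝ 1 F) (Mb : ℝ) :
    ∃ K : NNReal, LipschitzOnWith K F (Metric.closedBall (0:E) Mb) := by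
  have hcont : ContinuousOn (fun x => ‖fderiv ℝ F x‖) (Metric.closedBall (0:E) Mb) :=
    ((hF.continuous_fderiv one_ne_zero).norm).continuousOn
  obtain ⟨C, hC⟩ := (isCompact_closedBall (0:E) Mb).exists_bound_of_continuousOn hcont
  refine ⟨⟨max C 0, le_max_right _ _⟩, ?_⟩
  apply Convex.lipschitzOnWith_of_nnnorm_fderiv_le
    (fun x _ => (hF.differentiable one_ne_zero).differentiableAt) ?_ (convex_closedBall _ _)
  intro x hx
  show ‖fderiv ℝ F x‖ ≤ max C 0
  have h1 := hC x hx
  simp only [norm_norm] at h1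
  exact le_trans h1 (le_max_left _ _)

end Uniqueness

section Master
open Set

lemma master_sym (n n1 n2 N : ℕ) (T : ℝ)
    (A G Q Qf Γ Γf : Matrix (Fin n) (Fin n) ℝ)
    (B : Matrix (Fin n) (Fin n1) ℝ) (R : Matrix (Fin n1) (Fin n1) ℝ)
    (D : Matrix (Fin n) (Fin n2) ℝ) (η ηf : Fin n → ℝ)
    (P : Fin N → ℝ → Matrix (Fin N × Fin n) (Fin N × Fin n) ℝ)
    (hPd : ∀ i, ∀ t ∈ Set.Icc (0:ℝ) T, ∀ p q,
      HasDerivWithinAt (fun s => P i s p q)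
        (riccatiRHS n n1 N A G Q Γ B R (fun k => P k t) i p q) (Set.Icc (0:ℝ) T) t)
    (hPT : ∀ i, P i T = Qblk n N Qf Γf i)
    (S : Fin N → ℝ → (Fin N × Fin n → ℝ))
    (hSd : ∀ i, ∀ t ∈ Set.Icc (0:ℝ) T, ∀ q,
        HasDerivWithinAt (fun s => S i s q)
          (sRHS n n1 N A G Q Γ B R η (fun k => P k t) (fun k => S k t) i q)
          (Set.Icc (0:ℝ) T) t)
    (hST : ∀ i, S i T = -((Kblk n N Γf i)ᵀ *ᵥ (Qf *ᵥ ηf)))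
    (rr : Fin N → ℝ → ℝ)
    (hrd : ∀ i, ∀ t ∈ Set.Icc (0:ℝ) T,
        HasDerivWithinAt (rr i)
          (rRHS n n1 n2 N Q B R D η (fun k => P k t) (fun k => S k t) i)
          (Set.Icc (0:ℝ) T) t)
    (hrT : ∀ i, rr i T = ηf ⬝ᵥ (Qf *ᵥ ηf))
    (σ : Equiv.Perm (Fin N)) :
    ∀ t ∈ Set.Icc (0:ℝ) T,
      (∀ i p, S (σ i) t (pez σ n p) = S i t p) ∧ (∀ i, rr (σ i) t = rr i t) := by
  have hFC := FF_contDiff n n1 n2 N A G Q Γ B R D η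
  set XX : ℝ → EEsp n N :=
    fun t => (fun i p q => P i t p q, fun i p => S i t p, fun i => rr i t) with hXXdef
  set YY : ℝ → EEsp n N :=
    fun t => (fun i p q => P (σ i) t (pez σ n p) (pez σ n q),
      fun i p => S (σ i) t (pez σ n p), fun i => rr (σ i) t) with hYYdef
  have hXd : ∀ t ∈ Set.Icc (0:ℝ) T,
      HasDerivWithinAt XX (FF n n1 n2 N A G Q Γ B R D η (XX t)) (Set.Icc (0:ℝ) T) t := by
    intro t ht
    refine HasDerivWithinAt.prodMk ?_ (HasDerivWithinAt.prodMk ?_ ?_)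
    · rw [hasDerivWithinAt_pi]; intro i; rw [hasDerivWithinAt_pi]; intro p
      rw [hasDerivWithinAt_pi]; intro q
      exact hPd i t ht p q
    · rw [hasDerivWithinAt_pi]; intro i; rw [hasDerivWithinAt_pi]; intro p
      exact hSd i t ht p
    · rw [hasDerivWithinAt_pi]; intro i
      exact hrd i t ht
  have hYd : ∀ t ∈ Set.Icc (0:ℝ) T,
      HasDerivWithinAt YY (FF n n1 n2 N A G Q Γ B R D η (YY t)) (Set.Icc (0:ℝ) T) t := by
    intro t ht
    refine HasDerivWithinAt.prodMk ?_ (HasDerivWithinAt.prodMk ?_ ?_)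
    · rw [hasDerivWithinAt_pi]; intro i; rw [hasDerivWithinAt_pi]; intro p
      rw [hasDerivWithinAt_pi]; intro q
      have e1 : riccatiRHS n n1 N A G Q Γ B R (fun k => Matrix.of ((YY t).1 k)) i p q
          = riccatiRHS n n1 N A G Q Γ B R (fun k => P k t) (σ i) (pez σ n p) (pez σ n q) := by
        have h := riccati_equiv σ A G Q Γ B R (fun k => P k t) i
        calc riccatiRHS n n1 N A G Q Γ B R (fun k => Matrix.of ((YY t).1 k)) i p q
            = riccatiRHS n n1 N A G Q Γ B R
                (fun k => ((P (σ k) t)).submatrix (pez σ n) (pez σ n)) i p q := rfl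
          _ = (riccatiRHS n n1 N A G Q Γ B R (fun k => P k t) (σ i)).submatrix
                (pez σ n) (pez σ n) p q := by rw [h]
          _ = _ := rfl
      rw [e1]
      exact hPd (σ i) t ht _ _
    · rw [hasDerivWithinAt_pi]; intro i; rw [hasDerivWithinAt_pi]; intro p
      have e2 : sRHS n n1 N A G Q Γ B R η (fun k => Matrix.of ((YY t).1 k)) ((YY t).2.1) i p
          = sRHS n n1 N A G Q Γ B R η (fun k => P k t) (fun k => S k t) (σ i) (pez σ n p) := by
        have h := sRHS_equiv σ A G Q Γ B R η (fun k => P k t) (fun k => S k t) i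
        calc sRHS n n1 N A G Q Γ B R η (fun k => Matrix.of ((YY t).1 k)) ((YY t).2.1) i p
            = sRHS n n1 N A G Q Γ B R η
                (fun k => ((P (σ k) t)).submatrix (pez σ n) (pez σ n))
                (fun k => (S (σ k) t) ∘ ⇑(pez σ n)) i p := rfl
          _ = ((sRHS n n1 N A G Q Γ B R η (fun k => P k t) (fun k => S k t) (σ i))
                ∘ ⇑(pez σ n)) p := by rw [h]
          _ = _ := rfl
      rw [e2]
      exact hSd (σ i) t ht _
    · rw [hasDerivWithinAt_pi]; intro i
      have e3 : rRHS n n1 n2 N Q B R D η (fun k => Matrix.of ((YY t).1 k)) ((YY t).2.1) i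
          = rRHS n n1 n2 N Q B R D η (fun k => P k t) (fun k => S k t) (σ i) := by
        have h := rRHS_equiv σ Q B R D η (fun k => P k t) (fun k => S k t) i
        calc rRHS n n1 n2 N Q B R D η (fun k => Matrix.of ((YY t).1 k)) ((YY t).2.1) i
            = rRHS n n1 n2 N Q B R D η
                (fun k => ((P (σ k) t)).submatrix (pez σ n) (pez σ n))
                (fun k => (S (σ k) t) ∘ ⇑(pez σ n)) i := rfl
          _ = _ := h
      rw [e3]
      exact hrd (σ i) t ht
  have hterm : XX T = YY T := by
    refine Prod.ext ?_ (Prod.ext ?_ ?_)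
    · funext i p q
      show P i T p q = P (σ i) T (pez σ n p) (pez σ n q)
      rw [hPT i, hPT (σ i)]
      exact (congrFun (congrFun (Qblk_pe σ Qf Γf i) p) q).symm
    · funext i p
      show S i T p = S (σ i) T (pez σ n p)
      rw [hST i, hST (σ i)]
      have h := congrFun (KT_vec σ Γf i (Qf *ᵥ ηf)) p
      simp only [Function.comp_apply] at h
      simp only [Pi.neg_apply]
      rw [h]
    · funext i
      show rr i T = rr (σ i) T
      rw [hrT i, hrT (σ i)]
  have hXc : ContinuousOn XX (Set.Icc (0:ℝ) T) := fun u hu => (hXd u hu).continuousWithinAt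
  have hYc : ContinuousOn YY (Set.Icc (0:ℝ) T) := fun u hu => (hYd u hu).continuousWithinAt
  obtain ⟨C1, hC1⟩ := isCompact_Icc.exists_bound_of_continuousOn hXc
  obtain ⟨C2, hC2⟩ := isCompact_Icc.exists_bound_of_continuousOn hYc
  obtain ⟨K, hK⟩ := lips_on_ball hFC (max C1 C2)
  have huni := terminal_unique hK hXd hYd
    (fun u hu => mem_closedBall_zero_iff.mpr ((hC1 u hu).trans (le_max_left _ _)))
    (fun u hu => mem_closedBall_zero_iff.mpr ((hC2 u hu).trans (le_max_right _ _)))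
    hterm
  intro t ht
  have heq := huni ht
  constructor
  · intro i p
    exact (congrFun (congrFun (congrArg (fun z : EEsp n N => z.2.1) heq) i) p).symm
  · intro i
    exact (congrFun (congrArg (fun z : EEsp n N => z.2.2) heq) i).symm

end Master

/-- If the `N`-player Riccati system has a solution `(P_1,…,P_N)` on
`[0,T]`, and `(S_1,…,S_N)`, `(r_1,…,r_N)` solve the associated linear terminal value
problems, then each `S_i(t)` has `i`-th block `θ₁(t)` and all other blocks `θ₂(t)`,
and `r_1 = r_2 = ⋯ = r_N` on `[0,T]`. -/
theorem S_block_representation_and_r_equal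
    (n n1 n2 N : ℕ) (hn : 0 < n) (hn1 : 0 < n1) (hn2 : 0 < n2) (hN : 0 < N)
    (T : ℝ) (hT : 0 < T)
    (A G Q Qf Γ Γf : Matrix (Fin n) (Fin n) ℝ)
    (B : Matrix (Fin n) (Fin n1) ℝ) (R : Matrix (Fin n1) (Fin n1) ℝ)
    (D : Matrix (Fin n) (Fin n2) ℝ) (η ηf : Fin n → ℝ)
    (hQ : Q.PosSemidef) (hQf : Qf.PosSemidef) (hR : R.PosDef)
    (P : Fin N → ℝ → Matrix (Fin N × Fin n) (Fin N × Fin n) ℝ)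
    (hP : IsRiccatiSol n n1 N A G Q Qf Γ Γf B R 0 T P)
    (S : Fin N → ℝ → (Fin N × Fin n → ℝ))
    (hS : (∀ i, ∀ t ∈ Set.Icc (0:ℝ) T, ∀ q,
        HasDerivWithinAt (fun s => S i s q)
          (sRHS n n1 N A G Q Γ B R η (fun k => P k t) (fun k => S k t) i q)
          (Set.Icc (0:ℝ) T) t)
      ∧ ∀ i, S i T = -((Kblk n N Γf i)ᵀ *ᵥ (Qf *ᵥ ηf)))
    (rr : Fin N → ℝ → ℝ)
    (hr : (∀ i, ∀ t ∈ Set.Icc (0:ℝ) T,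
        HasDerivWithinAt (rr i)
          (rRHS n n1 n2 N Q B R D η (fun k => P k t) (fun k => S k t) i)
          (Set.Icc (0:ℝ) T) t)
      ∧ ∀ i, rr i T = ηf ⬝ᵥ (Qf *ᵥ ηf)) :
    (∃ θ1 θ2 : ℝ → Fin n → ℝ,
      ∀ i : Fin N, ∀ t ∈ Set.Icc (0:ℝ) T, ∀ (j : Fin N) (r : Fin n),
        S i t (j, r) = if j = i then θ1 t r else θ2 t r) ∧
    (∀ i j : Fin N, ∀ t ∈ Set.Icc (0:ℝ) T, rr i t = rr j t) := by
  obtain ⟨hPd, hPT⟩ := hP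
  obtain ⟨hSd, hST⟩ := hS
  obtain ⟨hrd, hrT⟩ := hr
  have key := master_sym n n1 n2 N T A G Q Qf Γ Γf B R D η ηf P hPd hPT S hSd hST rr hrd hrT
  constructor
  · refine ⟨fun t r => S ⟨0, hN⟩ t (⟨0, hN⟩, r),
      fun t r => if h : 1 < N then S ⟨0, hN⟩ t (⟨1, h⟩, r) else 0, ?_⟩
    intro i t ht j r
    by_cases hji : j = i
    · subst hji
      rw [if_pos rfl]
      have h := (key (Equiv.swap ⟨0, hN⟩ j) t ht).1 ⟨0, hN⟩ (⟨0, hN⟩, r)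
      simpa [Equiv.swap_apply_left] using h
    · rw [if_neg hji]
      have hN2 : 1 < N := by
        rcases Nat.lt_or_ge 1 N with h | h
        · exact h
        · exact absurd (Fin.ext (by omega : (j : ℕ) = (i : ℕ))) hji
      show S i t (j, r) = if h : 1 < N then S ⟨0, hN⟩ t (⟨1, h⟩, r) else 0
      rw [dif_pos hN2]
      set i0 : Fin N := ⟨0, hN⟩ with hi0
      set i1 : Fin N := ⟨1, hN2⟩ with hi1
      set τ := Equiv.swap i0 i with hτ
      have hj' : τ j ≠ i0 := by
        intro hc
        apply hji
        have := congrArg τ hc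
        rwa [Equiv.swap_apply_self, Equiv.swap_apply_left] at this
      have h01 : i0 ≠ i1 := by
        intro hc
        simpa [hi0, hi1, Fin.ext_iff] using hc
      set σ := (Equiv.swap i1 (τ j)).trans τ with hσ
      have hσ0 : σ i0 = i := by
        rw [hσ]
        simp only [Equiv.trans_apply]
        rw [Equiv.swap_apply_of_ne_of_ne h01 (Ne.symm hj')]
        exact Equiv.swap_apply_left i0 i
      have hσ1 : σ i1 = j := by
        rw [hσ]
        simp only [Equiv.trans_apply]
        rw [Equiv.swap_apply_left, hτ, Equiv.swap_apply_self]
      have h := (key σ t ht).1 i0 (i1, r)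
      simp only [pez_apply] at h
      rw [hσ0, hσ1] at h
      exact h
  · intro i j t ht
    have h := (key (Equiv.swap j i) t ht).2 j
    simpa [Equiv.swap_apply_left] using h
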